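/- The Generalized Means measure GM_r is strictly increasing in c11 (for fixed c10, c01, c00), provided neither labeling is constant. Concretely, for r ≠ 0 and nonnegative reals c11, c10, c01, c00 with a1 = c11+c10 > 0, a0 = c01+c00 > 0, b1 = c11+c01 > 0, b0 = c10+c00 > 0, the partial derivative of GM_r(c11,c10,c01,c00) = (n·c11 − a1·b1)·(½(a1^r a0^r + b1^r b0^r))^{−1/r} with respect to c11 (treating c11,c10,c01,c00 as independent variables, n = c11+c10+c01+c00) has the same sign as a0^r·a1^{r−1}·a0·c10 + b0^r·b1^{r−1}·b0·c01 ≥ 0, and is strictly positive whenever c10 > 0 or c01 > 0. -/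

import Mathlib

noncomputable def GM (r c11 c10 c01 c00 : ℝ) : ℝ :=
  ((c11 + c10 + c01 + c00) * c11 - (c11 + c10) * (c11 + c01)) /
    ((1 / 2) * ((c11 + c10) ^ r * (c01 + c00) ^ r +
                (c11 + c01) ^ r * (c10 + c00) ^ r)) ^ (1 / r)

theorem gm_strictly_increasing_in_c11 (r : ℝ) (hr : r ≠ 0)
    (c11 c10 c01 c00 : ℝ)
    (h11 : 0 ≤ c11) (h10 : 0 ≤ c10) (h01 : 0 ≤ c01) (h00 : 0 ≤ c00)
    (ha1 : 0 < c11 + c10) (ha0 : 0 < c01 + c00)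
    (hb1 : 0 < c11 + c01) (hb0 : 0 < c10 + c00) :
    Real.sign (deriv (fun x => GM r x c10 c01 c00) c11) =
      Real.sign ((c01 + c00) ^ r * (c11 + c10) ^ (r - 1) * (c01 + c00) * c10 +
                 (c10 + c00) ^ r * (c11 + c01) ^ (r - 1) * (c10 + c00) * c01) ∧
    0 ≤ (c01 + c00) ^ r * (c11 + c10) ^ (r - 1) * (c01 + c00) * c10 +
        (c10 + c00) ^ r * (c11 + c01) ^ (r - 1) * (c10 + c00) * c01 ∧
    ((0 < c10 ∨ 0 < c01) → 0 < deriv (fun x => GM r x c10 c01 c00) c11) := by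
  have ha1' : c11 + c10 ≠ 0 := ha1.ne'
  have hb1' : c11 + c01 ≠ 0 := hb1.ne'
  -- abbreviations
  set A1 : ℝ := (c11 + c10) ^ (r - 1) with hA1
  set B1 : ℝ := (c11 + c01) ^ (r - 1) with hB1
  set a0r : ℝ := (c01 + c00) ^ r with ha0r
  set b0r : ℝ := (c10 + c00) ^ r with hb0r
  have hA1pos : 0 < A1 := Real.rpow_pos_of_pos ha1 _
  have hB1pos : 0 < B1 := Real.rpow_pos_of_pos hb1 _
  have ha0rpos : 0 < a0r := Real.rpow_pos_of_pos ha0 _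
  have hb0rpos : 0 < b0r := Real.rpow_pos_of_pos hb0 _
  have ha1r : (c11 + c10) ^ r = A1 * (c11 + c10) := by
    rw [hA1, ← Real.rpow_add_one ha1' (r - 1), sub_add_cancel]
  have hb1r : (c11 + c01) ^ r = B1 * (c11 + c01) := by
    rw [hB1, ← Real.rpow_add_one hb1' (r - 1), sub_add_cancel]
  -- the denominator base D and its value
  set Dval : ℝ := (1 / 2) * ((c11 + c10) ^ r * a0r + (c11 + c01) ^ r * b0r) with hDval
  have hDpos : 0 < Dval := by
    rw [hDval]
    have := Real.rpow_pos_of_pos ha1 r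
    have := Real.rpow_pos_of_pos hb1 r
    nlinarith
  set E : ℝ := Dval ^ (1 / r) with hE
  have hEpos : 0 < E := Real.rpow_pos_of_pos hDpos _
  -- derivatives
  have hx1 : HasDerivAt (fun x : ℝ => x + c10) 1 c11 := (hasDerivAt_id c11).add_const c10
  have hx2 : HasDerivAt (fun x : ℝ => x + c01) 1 c11 := (hasDerivAt_id c11).add_const c01
  have hp1 : HasDerivAt (fun x : ℝ => (x + c10) ^ r) (1 * r * A1) c11 :=
    hx1.rpow_const (Or.inl ha1')
  have hp2 : HasDerivAt (fun x : ℝ => (x + c01) ^ r) (1 * r * B1) c11 :=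
    hx2.rpow_const (Or.inl hb1')
  have hD : HasDerivAt (fun x : ℝ => (1 / 2) * ((x + c10) ^ r * a0r + (x + c01) ^ r * b0r))
      ((1 / 2) * (1 * r * A1 * a0r + 1 * r * B1 * b0r)) c11 :=
    ((hp1.mul_const a0r).add (hp2.mul_const b0r)).const_mul (1 / 2)
  have hDen : HasDerivAt (fun x : ℝ => ((1 / 2) * ((x + c10) ^ r * a0r + (x + c01) ^ r * b0r)) ^ (1 / r))
      ((1 / 2) * (1 * r * A1 * a0r + 1 * r * B1 * b0r) * (1 / r) * Dval ^ (1 / r - 1)) c11 :=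
    hD.rpow_const (Or.inl hDpos.ne')
  have hNum : HasDerivAt (fun x : ℝ => c00 * x - c10 * c01) (c00 * 1) c11 :=
    ((hasDerivAt_id c11).const_mul c00).sub_const _
  have hfun : (fun x => GM r x c10 c01 c00) =
      fun x : ℝ => (c00 * x - c10 * c01) /
        ((1 / 2) * ((x + c10) ^ r * a0r + (x + c01) ^ r * b0r)) ^ (1 / r) := by
    funext x
    unfold GM
    rw [ha0r, hb0r,
      show (x + c10 + c01 + c00) * x - (x + c10) * (x + c01) = c00 * x - c10 * c01 from by ring]
  have hEne : ((1 / 2) * ((c11 + c10) ^ r * a0r + (c11 + c01) ^ r * b0r)) ^ (1 / r) ≠ 0 := by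
    rw [← hDval, ← hE]; exact hEpos.ne'
  have hderiv : deriv (fun x => GM r x c10 c01 c00) c11 =
      (c00 * 1 * E - (c00 * c11 - c10 * c01) *
        ((1 / 2) * (1 * r * A1 * a0r + 1 * r * B1 * b0r) * (1 / r) * Dval ^ (1 / r - 1))) / E ^ 2 := by
    rw [hfun]
    have h : deriv (fun x : ℝ => (c00 * x - c10 * c01) /
        ((1 / 2) * ((x + c10) ^ r * a0r + (x + c01) ^ r * b0r)) ^ (1 / r)) c11 = _ :=
      (hNum.div hDen hEne).deriv
    rw [h, ← hDval, ← hE]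
  -- rewrite the derivative as S / (2 * Dval * E)
  set S : ℝ := a0r * A1 * (c01 + c00) * c10 + b0r * B1 * (c10 + c00) * c01 with hS
  have hsub : Dval ^ (1 / r - 1) = E / Dval := by
    rw [Real.rpow_sub hDpos, Real.rpow_one, hE]
  have hkey : deriv (fun x => GM r x c10 c01 c00) c11 = S / (2 * Dval * E) := by
    rw [hderiv, hsub, hS, hDval, ha1r, hb1r]
    have hDne : ((1:ℝ) / 2) * (A1 * (c11 + c10) * a0r + B1 * (c11 + c01) * b0r) ≠ 0 := by
      rw [← ha1r, ← hb1r, ← hDval]; exact hDpos.ne'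
    field_simp
    ring
  have hSnn : 0 ≤ S := by
    have h1 : 0 ≤ a0r * A1 * (c01 + c00) * c10 := by positivity
    have h2 : 0 ≤ b0r * B1 * (c10 + c00) * c01 := by positivity
    linarith
  have hdenpos : 0 < 2 * Dval * E := by positivity
  refine ⟨?_, ?_, ?_⟩
  · rcases eq_or_lt_of_le hSnn with h | h
    · rw [hkey, ← h]
      simp
    · rw [hkey, Real.sign_of_pos (div_pos h hdenpos), Real.sign_of_pos h]
  · show 0 ≤ a0r * A1 * (c01 + c00) * c10 + b0r * B1 * (c10 + c00) * c01
    exact hSnn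
  · intro hc
    have hSpos : 0 < S := by
      rcases hc with h | h
      · have : 0 < a0r * A1 * (c01 + c00) * c10 := by positivity
        have h2 : 0 ≤ b0r * B1 * (c10 + c00) * c01 := by positivity
        rw [hS]; linarith
      · have : 0 < b0r * B1 * (c10 + c00) * c01 := by positivity
        have h2 : 0 ≤ a0r * A1 * (c01 + c00) * c10 := by positivity
        rw [hS]; linarith
    rw [hkey]
    exact div_pos hSpos hdenpos
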